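/- Fix a real m > 0 and set p* = (m+1)^{−1/m}. Let G^0, H^0 : ℤ → [0,1] be nondecreasing functions satisfying 0 ≤ G^0_k − G^0_{k−1} ≤ p* and 0 ≤ H^0_k − H^0_{k−1} ≤ p* for all k ∈ ℤ, and G^0_k ≤ H^0_k for all k ∈ ℤ. Define G^n and H^n inductively by F^{n+1}_k = F^n_k + (1/2)[(F^n_{k+1} − F^n_k)^{m+1} − (F^n_k − F^n_{k−1})^{m+1}]. Then for all n ∈ ℕ and all k ∈ ℤ: G^n_k ≤ H^n_k, 0 ≤ G^n_k − G^n_{k−1} ≤ p*, and 0 ≤ H^n_k − H^n_{k−1} ≤ p*. -/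

import Mathlib

namespace Statement4Aux

/-- `x ↦ x - x^(m+1)` is monotone on `[0, (m+1)^(-1/m)]`. -/
lemma f_mono (m : ℝ) (hm : 0 < m) :
    MonotoneOn (fun x : ℝ => x - x ^ (m+1)) (Set.Icc 0 ((m+1) ^ (-(1/m) : ℝ))) := by
  have hm1 : (0:ℝ) ≤ m + 1 := by linarith
  have hd : ∀ x : ℝ, HasDerivAt (fun x : ℝ => x - x ^ (m+1)) (1 - (m+1) * x ^ m) x := by
    intro x
    have h := Real.hasDerivAt_rpow_const (x := x) (p := m+1) (Or.inr (by linarith))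
    exact (hasDerivAt_id' x).sub (by simpa using h)
  have hPm : ((m+1) ^ (-(1/m):ℝ)) ^ (m:ℝ) = (m+1)⁻¹ := by
    rw [← Real.rpow_mul hm1]
    have : -(1/m) * m = -1 := by field_simp
    rw [this, Real.rpow_neg_one]
  apply monotoneOn_of_deriv_nonneg (convex_Icc _ _)
  · exact (Differentiable.continuous (fun x => (hd x).differentiableAt)).continuousOn
  · exact (Differentiable.differentiableOn (fun x => (hd x).differentiableAt))
  · intro x hx
    rw [interior_Icc, Set.mem_Ioo] at hx
    rw [(hd x).deriv]
    have hxm : x ^ (m:ℝ) ≤ ((m+1) ^ (-(1/m):ℝ)) ^ (m:ℝ) :=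
      Real.rpow_le_rpow (le_of_lt hx.1) (le_of_lt hx.2) (le_of_lt hm)
    rw [hPm] at hxm
    have : (m+1) * x ^ (m:ℝ) ≤ 1 := by
      calc (m+1) * x ^ (m:ℝ) ≤ (m+1) * (m+1)⁻¹ := by nlinarith
      _ = 1 := by field_simp
    linarith

/-- Lipschitz-type bound: for `0 ≤ u ≤ v ≤ p*`, `v^(m+1) - u^(m+1) ≤ v - u`. -/
lemma lip (m : ℝ) (hm : 0 < m) {u v : ℝ} (hu : 0 ≤ u) (huv : u ≤ v)
    (hv : v ≤ (m+1) ^ (-(1/m) : ℝ)) :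
    v ^ (m+1) - u ^ (m+1) ≤ v - u := by
  have h := f_mono m hm (Set.mem_Icc.mpr ⟨hu, le_trans huv hv⟩)
      (Set.mem_Icc.mpr ⟨le_trans hu huv, hv⟩) huv
  simp only at h
  linarith

/-- For `u, v ∈ [0, p*]` and `v - u ≥ -e` with `e ≥ 0`, `v^(m+1) - u^(m+1) ≥ -e`. -/
lemma half_bound (m : ℝ) (hm : 0 < m) {u v e : ℝ}
    (hu0 : 0 ≤ u) (hv0 : 0 ≤ v)
    (huP : u ≤ (m+1) ^ (-(1/m) : ℝ)) (hvP : v ≤ (m+1) ^ (-(1/m) : ℝ))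
    (he : 0 ≤ e) (hvu : -e ≤ v - u) :
    -e ≤ v ^ (m+1) - u ^ (m+1) := by
  rcases le_total u v with h | h
  · have : u ^ (m+1) ≤ v ^ (m+1) := Real.rpow_le_rpow hu0 h (by linarith)
    linarith
  · have := lip m hm hv0 h huP
    linarith

/-- Increment preservation. The new increment is
`d + (1/2)*(c^(m+1) - d^(m+1)) - (1/2)*(d^(m+1) - a^(m+1))`. -/
lemma inc_step (m : ℝ) (hm : 0 < m) {a d c : ℝ}
    (ha : a ∈ Set.Icc 0 ((m+1) ^ (-(1/m) : ℝ)))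
    (hd : d ∈ Set.Icc 0 ((m+1) ^ (-(1/m) : ℝ)))
    (hc : c ∈ Set.Icc 0 ((m+1) ^ (-(1/m) : ℝ))) :
    0 ≤ d + (1/2) * (c^(m+1) - d^(m+1)) - (1/2) * (d^(m+1) - a^(m+1)) ∧
      d + (1/2) * (c^(m+1) - d^(m+1)) - (1/2) * (d^(m+1) - a^(m+1)) ≤
        (m+1) ^ (-(1/m) : ℝ) := by
  set P : ℝ := (m+1) ^ (-(1/m) : ℝ) with hP
  have hP0 : (0:ℝ) ≤ P := Real.rpow_nonneg (by linarith) _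
  obtain ⟨ha0, haP⟩ := ha
  obtain ⟨hd0, hdP⟩ := hd
  obtain ⟨hc0, hcP⟩ := hc
  have hf0 : (fun x : ℝ => x - x ^ (m+1)) 0 = 0 := by
    simp [Real.zero_rpow (by positivity : m + 1 ≠ 0)]
  -- lower bound: d - d^(m+1) ≥ 0
  have hlow : 0 ≤ d - d ^ (m+1) := by
    have := f_mono m hm (Set.mem_Icc.mpr ⟨le_refl 0, hP0⟩) (Set.mem_Icc.mpr ⟨hd0, hdP⟩) hd0
    rw [hf0] at this
    exact this
  -- upper bound: d - d^(m+1) ≤ P - P^(m+1)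
  have hhigh : d - d ^ (m+1) ≤ P - P ^ (m+1) := by
    exact f_mono m hm (Set.mem_Icc.mpr ⟨hd0, hdP⟩) (Set.mem_Icc.mpr ⟨hP0, le_refl P⟩) hdP
  have hcp : c ^ (m+1) ≤ P ^ (m+1) := Real.rpow_le_rpow hc0 hcP (by linarith)
  have hap : a ^ (m+1) ≤ P ^ (m+1) := Real.rpow_le_rpow ha0 haP (by linarith)
  have hcp0 : 0 ≤ c ^ (m+1) := Real.rpow_nonneg hc0 _
  have hap0 : 0 ≤ a ^ (m+1) := Real.rpow_nonneg ha0 _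
  constructor <;> nlinarith

end Statement4Aux

theorem statement4 (m : ℝ) (hm : 0 < m)
    (G H : ℕ → ℤ → ℝ)
    (hG0range : ∀ k : ℤ, 0 ≤ G 0 k ∧ G 0 k ≤ 1)
    (hH0range : ∀ k : ℤ, 0 ≤ H 0 k ∧ H 0 k ≤ 1)
    (hG0inc : ∀ k : ℤ, 0 ≤ G 0 k - G 0 (k - 1) ∧ G 0 k - G 0 (k - 1) ≤ (m + 1) ^ (-(1 / m) : ℝ))
    (hH0inc : ∀ k : ℤ, 0 ≤ H 0 k - H 0 (k - 1) ∧ H 0 k - H 0 (k - 1) ≤ (m + 1) ^ (-(1 / m) : ℝ))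
    (hGH0 : ∀ k : ℤ, G 0 k ≤ H 0 k)
    (hGrec : ∀ (n : ℕ) (k : ℤ),
      G (n + 1) k = G n k + (1 / 2) * ((G n (k + 1) - G n k) ^ (m + 1) - (G n k - G n (k - 1)) ^ (m + 1)))
    (hHrec : ∀ (n : ℕ) (k : ℤ),
      H (n + 1) k = H n k + (1 / 2) * ((H n (k + 1) - H n k) ^ (m + 1) - (H n k - H n (k - 1)) ^ (m + 1))) :
    ∀ (n : ℕ) (k : ℤ),
      G n k ≤ H n k ∧
      (0 ≤ G n k - G n (k - 1) ∧ G n k - G n (k - 1) ≤ (m + 1) ^ (-(1 / m) : ℝ)) ∧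
      (0 ≤ H n k - H n (k - 1) ∧ H n k - H n (k - 1) ≤ (m + 1) ^ (-(1 / m) : ℝ)) := by
  intro n
  induction n with
  | zero => exact fun k => ⟨hGH0 k, hG0inc k, hH0inc k⟩
  | succ n IH =>
    intro k
    -- increments of G n around k
    have e1 : k - 1 + 1 = k := by ring
    have e2 : k + 1 - 1 = k := by ring
    -- increments from IH
    have iGk := (IH k).2.1
    have iGk1 : 0 ≤ G n (k+1) - G n k ∧ G n (k+1) - G n k ≤ (m + 1) ^ (-(1 / m) : ℝ) := by
      have := (IH (k+1)).2.1; rwa [e2] at this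
    have iGkm : 0 ≤ G n (k-1) - G n (k-1-1) ∧
        G n (k-1) - G n (k-1-1) ≤ (m + 1) ^ (-(1 / m) : ℝ) := (IH (k-1)).2.1
    have iHk := (IH k).2.2
    have iHk1 : 0 ≤ H n (k+1) - H n k ∧ H n (k+1) - H n k ≤ (m + 1) ^ (-(1 / m) : ℝ) := by
      have := (IH (k+1)).2.2; rwa [e2] at this
    have iHkm : 0 ≤ H n (k-1) - H n (k-1-1) ∧
        H n (k-1) - H n (k-1-1) ≤ (m + 1) ^ (-(1 / m) : ℝ) := (IH (k-1)).2.2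
    -- recursion equations
    have rGk := hGrec n k
    have rGk1 := hGrec n (k-1); rw [e1] at rGk1
    have rHk := hHrec n k
    have rHk1 := hHrec n (k-1); rw [e1] at rHk1
    refine ⟨?_, ?_, ?_⟩
    · -- comparison
      have he : 0 ≤ H n k - G n k := by linarith [(IH k).1]
      have hl := Statement4Aux.half_bound m hm iGk1.1 iHk1.1 iGk1.2 iHk1.2 he
        (by linarith [(IH (k+1)).1])
      have hr := Statement4Aux.half_bound m hm iHk.1 iGk.1 iHk.2 iGk.2 he
        (by linarith [(IH (k-1)).1])
      -- 1/m is the same as 1 / m syntactically; combine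
      linarith [rGk, rHk, hl, hr]
    · -- G increment
      have := Statement4Aux.inc_step m hm
        (Set.mem_Icc.mpr iGkm) (Set.mem_Icc.mpr iGk) (Set.mem_Icc.mpr iGk1)
      constructor <;> [skip; skip] <;>
        · first
          | (obtain ⟨h1, h2⟩ := this; linarith)
    · -- H increment
      have := Statement4Aux.inc_step m hm
        (Set.mem_Icc.mpr iHkm) (Set.mem_Icc.mpr iHk) (Set.mem_Icc.mpr iHk1)
      constructor <;>
        · obtain ⟨h1, h2⟩ := this; linarith
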